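/- (Theorem 5.2, bound (5.7), deterministic form.) Under the stated hypotheses, ‖β*‖₂ ≤ (1/√(γ g(σ_{k+1}))) ‖D e‖₂ + √(g(σ_k)/g(σ_{k+1})) ‖x‖₂. -/

import Mathlib

open scoped BigOperators Matrix

/-- `f_T(λ) = √(Σ_{t=0}^{T-1} λ^{2t})`. -/
noncomputable def fT (T : ℕ) (l : ℝ) : ℝ := Real.sqrt (∑ t ∈ Finset.range T, l ^ (2 * t))

/-- Theorem 5.2, bound (5.7), deterministic form. Same setting as
Theorem 5.2: `(π_{A,T}(x))(t,i) = (A^t x)(i)`, `(Φ v)_i = d_i v(s(i))`,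
`(D e)_i = d_i e_i`, `A = Σ_j λ_j u_j u_jᵀ`, `G = Σ_j g(σ_j) u_j u_jᵀ`;
`σ_k, σ_{k+1}` are `sig ⟨k-1⟩, sig ⟨k⟩` in 0-based indexing.  If `x*` minimizes
`x̃ ↦ ‖Φπ_{A,T}(x̃) − Dy‖₂² + γ x̃ᵀGx̃` over `ℝ^n` and `β* = x* − α*` with `α*`
the projection of `x*` onto `span{u_1,…,u_k}`, then
`‖β*‖₂ ≤ (1/√(γ g(σ_{k+1}))) ‖De‖₂ + √(g(σ_k)/g(σ_{k+1})) ‖x‖₂`. -/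
theorem stmt15 (n k T M : ℕ) (hn : 0 < n) (hk : 0 < k) (hT : 0 < T) (hkn : k < n)
    (hM : 0 < M)
    (u : Fin n → Fin n → ℝ)
    (hu : ∀ i j : Fin n, ∑ a, u i a * u j a = if i = j then 1 else 0)
    (lam : Fin n → ℝ)
    (hmono : ∀ i j : Fin n, i ≤ j → lam j ≤ lam i)
    (hnn : ∀ j, 0 ≤ lam j)
    (sig : Fin n → ℝ) (hsig : ∀ i j : Fin n, i ≤ j → sig i ≤ sig j)
    (A : Matrix (Fin n) (Fin n) ℝ)
    (hAdef : ∀ a b, A a b = ∑ j, lam j * u j a * u j b)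
    (g : ℝ → ℝ) (hg0 : ∀ j, 0 ≤ g (sig j))
    (hgmono : ∀ i j : Fin n, i ≤ j → g (sig i) ≤ g (sig j))
    (hgk1 : 0 < g (sig ⟨k, hkn⟩))
    (G : Matrix (Fin n) (Fin n) ℝ)
    (hGdef : ∀ a b, G a b = ∑ j, g (sig j) * u j a * u j b)
    (s : Fin M → Fin T × Fin n) (d : Fin M → ℝ) (hd : ∀ i, 0 < d i)
    (γ : ℝ) (hγ : 0 < γ) (δ : ℝ) (hδ0 : 0 < δ) (hδ1 : δ < 1)
    (Mmax : ℝ) (hMmax : 0 < Mmax)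
    (hMbd : ∀ v : Fin T × Fin n → ℝ,
      Real.sqrt (∑ i, (d i * v (s i)) ^ 2) ≤ Mmax * Real.sqrt (∑ q, v q ^ 2))
    (hframe : ∀ v ∈ Submodule.span ℝ
        (Set.range fun j : Fin k => u (Fin.castLE hkn.le j)),
      Real.sqrt (1 - δ) * fT T (lam ⟨k - 1, by omega⟩) * Real.sqrt (∑ a, v a ^ 2)
        ≤ Real.sqrt (∑ i, (d i * ((A ^ ((s i).1 : ℕ)).mulVec v) (s i).2) ^ 2))
    (x : Fin n → ℝ)
    (hx : x ∈ Submodule.span ℝ (Set.range fun j : Fin k => u (Fin.castLE hkn.le j)))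
    (e : Fin M → ℝ) (y : Fin M → ℝ)
    (hy : ∀ i, y i = ((A ^ ((s i).1 : ℕ)).mulVec x) (s i).2 + e i)
    (xstar : Fin n → ℝ)
    (hmin : ∀ z : Fin n → ℝ,
      (∑ i, (d i * ((A ^ ((s i).1 : ℕ)).mulVec xstar) (s i).2 - d i * y i) ^ 2)
          + γ * ∑ a, xstar a * G.mulVec xstar a
        ≤ (∑ i, (d i * ((A ^ ((s i).1 : ℕ)).mulVec z) (s i).2 - d i * y i) ^ 2)
          + γ * ∑ a, z a * G.mulVec z a)
    (αstar : Fin n → ℝ)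
    (hα : ∀ a, αstar a = ∑ j : Fin k,
      (∑ b, u (Fin.castLE hkn.le j) b * xstar b) * u (Fin.castLE hkn.le j) a)
    (βstar : Fin n → ℝ) (hβ : ∀ a, βstar a = xstar a - αstar a) :
    Real.sqrt (∑ a, βstar a ^ 2)
      ≤ 1 / Real.sqrt (γ * g (sig ⟨k, hkn⟩)) * Real.sqrt (∑ i, (d i * e i) ^ 2)
        + Real.sqrt (g (sig ⟨k - 1, by omega⟩) / g (sig ⟨k, hkn⟩))
          * Real.sqrt (∑ a, x a ^ 2) := by
  classical
  set gk1 : ℝ := g (sig ⟨k, hkn⟩) with hgk1def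
  set gkm : ℝ := g (sig ⟨k - 1, by omega⟩) with hgkmdef
  have hgkm0 : 0 ≤ gkm := hg0 _
  -- column orthonormality
  have hu' : ∀ a b : Fin n, ∑ j, u j a * u j b = if a = b then 1 else 0 := by
    have h1 : (Matrix.of u) * (Matrix.of u)ᵀ = 1 := by
      ext i j
      simpa [Matrix.mul_apply, Matrix.one_apply] using hu i j
    have h2 : (Matrix.of u)ᵀ * (Matrix.of u) = 1 := mul_eq_one_comm.mp h1
    intro a b
    have := congrFun (congrFun h2 a) b
    simpa [Matrix.mul_apply, Matrix.one_apply, Matrix.transpose_apply] using this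
  -- quadratic form in the eigenbasis
  have quad : ∀ v : Fin n → ℝ,
      ∑ a, v a * G.mulVec v a = ∑ j, g (sig j) * (∑ b, u j b * v b) ^ 2 := by
    intro v
    have hm : ∀ a, G.mulVec v a = ∑ j, g (sig j) * u j a * (∑ b, u j b * v b) := by
      intro a
      simp only [Matrix.mulVec, dotProduct, hGdef, Finset.sum_mul]
      rw [Finset.sum_comm]
      refine Finset.sum_congr rfl fun j _ => ?_
      rw [Finset.mul_sum]
      exact Finset.sum_congr rfl fun b _ => by ring
    calc ∑ a, v a * G.mulVec v a
        = ∑ a, ∑ j, v a * (g (sig j) * u j a * (∑ b, u j b * v b)) := by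
          simp only [hm, Finset.mul_sum]
      _ = ∑ j, g (sig j) * (∑ b, u j b * v b) ^ 2 := by
          rw [Finset.sum_comm]
          refine Finset.sum_congr rfl fun j _ => ?_
          have h : ∑ a, v a * (g (sig j) * u j a * (∑ b, u j b * v b))
              = (g (sig j) * (∑ b, u j b * v b)) * ∑ a, u j a * v a := by
            rw [Finset.mul_sum]
            exact Finset.sum_congr rfl fun a _ => by ring
          rw [h]; ring
  -- Parseval
  have pars : ∀ v : Fin n → ℝ, ∑ j, (∑ b, u j b * v b) ^ 2 = ∑ a, v a ^ 2 := by
    intro v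
    calc ∑ j, (∑ b, u j b * v b) ^ 2
        = ∑ j, ∑ a, ∑ b, (u j a * v a) * (u j b * v b) := by
          refine Finset.sum_congr rfl fun j _ => ?_
          rw [sq, Finset.sum_mul_sum]
      _ = ∑ a, ∑ b, (v a * v b) * ∑ j, u j a * u j b := by
          rw [Finset.sum_comm]
          refine Finset.sum_congr rfl fun a _ => ?_
          rw [Finset.sum_comm]
          refine Finset.sum_congr rfl fun b _ => ?_
          rw [Finset.mul_sum]
          exact Finset.sum_congr rfl fun j _ => by ring
      _ = ∑ a, v a ^ 2 := by
          refine Finset.sum_congr rfl fun a _ => ?_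
          simp only [hu', mul_ite, mul_one, mul_zero]
          simp [sq, Finset.sum_ite_eq]
  set c : Fin n → ℝ := fun j => ∑ b, u j b * xstar b with hc
  -- coefficients of βstar
  have hβc : ∀ i : Fin n, ∑ b, u i b * βstar b = if (i : ℕ) < k then 0 else c i := by
    intro i
    have hαc : ∑ b, u i b * αstar b
        = ∑ j : Fin k, c (Fin.castLE hkn.le j) * (if i = Fin.castLE hkn.le j then 1 else 0) := by
      calc ∑ b, u i b * αstar b
          = ∑ b, ∑ j : Fin k, u i b * (c (Fin.castLE hkn.le j) * u (Fin.castLE hkn.le j) b) := by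
            refine Finset.sum_congr rfl fun b _ => ?_
            rw [hα, Finset.mul_sum]
        _ = ∑ j : Fin k, c (Fin.castLE hkn.le j) * ∑ b, u i b * u (Fin.castLE hkn.le j) b := by
            rw [Finset.sum_comm]
            refine Finset.sum_congr rfl fun j _ => ?_
            rw [Finset.mul_sum]
            exact Finset.sum_congr rfl fun b _ => by ring
        _ = _ := by
            refine Finset.sum_congr rfl fun j _ => ?_
            rw [hu i (Fin.castLE hkn.le j)]
    have hsplit : ∑ b, u i b * βstar b = c i - ∑ b, u i b * αstar b := by
      simp only [hβ, mul_sub, Finset.sum_sub_distrib, hc]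
    rw [hsplit, hαc]
    by_cases hik : (i : ℕ) < k
    · rw [if_pos hik]
      have hsum : ∑ j : Fin k, c (Fin.castLE hkn.le j) * (if i = Fin.castLE hkn.le j then 1 else 0)
          = c i := by
        rw [Finset.sum_eq_single (⟨(i : ℕ), hik⟩ : Fin k)]
        · have : i = Fin.castLE hkn.le ⟨(i : ℕ), hik⟩ := by
            apply Fin.ext; simp
          rw [← this]; simp
        · intro j _ hne
          have : i ≠ Fin.castLE hkn.le j := by
            intro h
            apply hne
            apply Fin.ext
            simpa [Fin.ext_iff] using h.symm
          simp [this]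
        · simp
      rw [hsum]; ring
    · rw [if_neg hik]
      have hsum : ∑ j : Fin k, c (Fin.castLE hkn.le j) * (if i = Fin.castLE hkn.le j then 1 else 0)
          = 0 := by
        refine Finset.sum_eq_zero fun j _ => ?_
        have : i ≠ Fin.castLE hkn.le j := by
          intro h
          apply hik
          have := congrArg Fin.val h
          simp at this
          omega
        simp [this]
      rw [hsum]; ring
  -- coefficients of x vanish above k
  have hxc : ∀ i : Fin n, k ≤ (i : ℕ) → ∑ b, u i b * x b = 0 := by
    obtain ⟨w, hw⟩ := (Submodule.mem_span_range_iff_exists_fun ℝ).mp hx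
    intro i hi
    have hxb : ∀ b, x b = ∑ j : Fin k, w j * u (Fin.castLE hkn.le j) b := by
      intro b
      rw [← hw]
      simp [Finset.sum_apply]
    calc ∑ b, u i b * x b
        = ∑ b, ∑ j : Fin k, u i b * (w j * u (Fin.castLE hkn.le j) b) := by
          refine Finset.sum_congr rfl fun b _ => ?_
          rw [hxb b, Finset.mul_sum]
      _ = ∑ j : Fin k, w j * ∑ b, u i b * u (Fin.castLE hkn.le j) b := by
          rw [Finset.sum_comm]
          refine Finset.sum_congr rfl fun j _ => ?_
          rw [Finset.mul_sum]
          exact Finset.sum_congr rfl fun b _ => by ring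
      _ = 0 := by
          refine Finset.sum_eq_zero fun j _ => ?_
          rw [hu i (Fin.castLE hkn.le j)]
          have : i ≠ Fin.castLE hkn.le j := by
            intro h
            have := congrArg Fin.val h
            simp at this
            omega
          simp [this]
  set E : ℝ := ∑ i, (d i * e i) ^ 2 with hE
  set X : ℝ := ∑ a, x a ^ 2 with hX
  set B : ℝ := ∑ a, βstar a ^ 2 with hB
  have hE0 : 0 ≤ E := Finset.sum_nonneg fun i _ => sq_nonneg _
  have hX0 : 0 ≤ X := Finset.sum_nonneg fun a _ => sq_nonneg _
  have hB0 : 0 ≤ B := Finset.sum_nonneg fun a _ => sq_nonneg _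
  -- plug z = x into minimality
  have hmx := hmin x
  have hres : ∑ i, (d i * ((A ^ ((s i).1 : ℕ)).mulVec x) (s i).2 - d i * y i) ^ 2 = E := by
    refine Finset.sum_congr rfl fun i _ => ?_
    rw [hy i]; ring
  rw [hres] at hmx
  have hS0 : 0 ≤ ∑ i, (d i * ((A ^ ((s i).1 : ℕ)).mulVec xstar) (s i).2 - d i * y i) ^ 2 :=
    Finset.sum_nonneg fun i _ => sq_nonneg _
  have hkey : γ * ∑ a, xstar a * G.mulVec xstar a ≤ E + γ * ∑ a, x a * G.mulVec x a := by
    linarith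
  -- upper bound on x's quadratic form
  have hQx : ∑ a, x a * G.mulVec x a ≤ gkm * X := by
    rw [quad x]
    have : gkm * X = ∑ j, gkm * (∑ b, u j b * x b) ^ 2 := by
      rw [← Finset.mul_sum, pars x]
    rw [this]
    refine Finset.sum_le_sum fun j _ => ?_
    by_cases hj : (j : ℕ) < k
    · have hle : g (sig j) ≤ gkm := by
        refine hgmono j ⟨k - 1, by omega⟩ ?_
        rw [Fin.le_def]; simp; omega
      exact mul_le_mul_of_nonneg_right hle (sq_nonneg _)
    · rw [hxc j (by omega)]
      simp
  -- lower bound on xstar's quadratic form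
  have hQs : gk1 * B ≤ ∑ a, xstar a * G.mulVec xstar a := by
    rw [quad xstar]
    have hBeq : gk1 * B = ∑ j : Fin n, gk1 * (if (j : ℕ) < k then 0 else c j) ^ 2 := by
      rw [← Finset.mul_sum]
      congr 1
      rw [hB, ← pars βstar]
      exact Finset.sum_congr rfl fun j _ => by rw [hβc j]
    rw [hBeq]
    refine Finset.sum_le_sum fun j _ => ?_
    by_cases hj : (j : ℕ) < k
    · rw [if_pos hj]
      simpa using mul_nonneg (hg0 j) (sq_nonneg (c j))
    · rw [if_neg hj]
      have hle : gk1 ≤ g (sig j) := by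
        refine hgmono ⟨k, hkn⟩ j ?_
        rw [Fin.le_def]; simp; omega
      exact mul_le_mul_of_nonneg_right hle (sq_nonneg _)
  -- combine
  have hγgk1 : 0 < γ * gk1 := mul_pos hγ hgk1
  have hBbd : B ≤ E / (γ * gk1) + gkm / gk1 * X := by
    have h1 : B ≤ (E + γ * (gkm * X)) / (γ * gk1) := by
      rw [le_div_iff₀ hγgk1]
      nlinarith [hkey, hQx, hQs, hγ.le]
    have h2 : (E + γ * (gkm * X)) / (γ * gk1) = E / (γ * gk1) + gkm / gk1 * X := by
      field_simp
    rw [h2] at h1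
    exact h1
  have hsqrtadd : Real.sqrt (E / (γ * gk1) + gkm / gk1 * X)
      ≤ Real.sqrt (E / (γ * gk1)) + Real.sqrt (gkm / gk1 * X) := by
    have ha : (0:ℝ) ≤ E / (γ * gk1) := div_nonneg hE0 hγgk1.le
    have hb : (0:ℝ) ≤ gkm / gk1 * X := mul_nonneg (div_nonneg hgkm0 hgk1.le) hX0
    have h : E / (γ * gk1) + gkm / gk1 * X
        ≤ (Real.sqrt (E / (γ * gk1)) + Real.sqrt (gkm / gk1 * X)) ^ 2 := by
      nlinarith [Real.sq_sqrt ha, Real.sq_sqrt hb, Real.sqrt_nonneg (E / (γ * gk1)),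
        Real.sqrt_nonneg (gkm / gk1 * X)]
    calc Real.sqrt (E / (γ * gk1) + gkm / gk1 * X)
        ≤ Real.sqrt ((Real.sqrt (E / (γ * gk1)) + Real.sqrt (gkm / gk1 * X)) ^ 2) :=
          Real.sqrt_le_sqrt h
      _ = _ := Real.sqrt_sq (by positivity)
  have h1 : Real.sqrt (E / (γ * gk1)) = 1 / Real.sqrt (γ * gk1) * Real.sqrt E := by
    rw [Real.sqrt_div hE0, one_div, inv_mul_eq_div]
  have h2 : Real.sqrt (gkm / gk1 * X) = Real.sqrt (gkm / gk1) * Real.sqrt X := by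
    rw [Real.sqrt_mul (div_nonneg hgkm0 hgk1.le)]
  calc Real.sqrt B ≤ Real.sqrt (E / (γ * gk1) + gkm / gk1 * X) := Real.sqrt_le_sqrt hBbd
    _ ≤ Real.sqrt (E / (γ * gk1)) + Real.sqrt (gkm / gk1 * X) := hsqrtadd
    _ = 1 / Real.sqrt (γ * gk1) * Real.sqrt E + Real.sqrt (gkm / gk1) * Real.sqrt X := by
        rw [h1, h2]
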